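/- For every bounded linear operator B : 𝓚 → 𝓗, the set ρ(A_B) is open in ℂ, and for every f ∈ 𝓗 and every μ ∈ ρ(A_B), the map λ ↦ S_{λ,B}f (defined on ρ(A_B), with values in H) has complex derivative at μ equal to (A_B − μ)⁻¹S_{μ,B}f. -/

import Mathlib

open scoped InnerProductSpace

noncomputable section

/-- `R` is the (bounded, everywhere-defined) resolvent of the restriction `A_B` of `T`
to `{u ∈ dT : Γ1 u = B (Γ2 u)}` at the spectral parameter `lam`. -/
structure IsResolventAt {H E F : Type*}
    [NormedAddCommGroup H] [InnerProductSpace ℂ H]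
    [NormedAddCommGroup E] [InnerProductSpace ℂ E]
    [NormedAddCommGroup F] [InnerProductSpace ℂ F]
    (dT : Submodule ℂ H) (T : ↥dT →ₗ[ℂ] H)
    (Γ1 : ↥dT →ₗ[ℂ] E) (Γ2 : ↥dT →ₗ[ℂ] F)
    (B : F →L[ℂ] E) (lam : ℂ) (R : H →L[ℂ] H) : Prop where
  mem : ∀ y : H, R y ∈ dT
  bc : ∀ y : H, Γ1 ⟨R y, mem y⟩ = B (Γ2 ⟨R y, mem y⟩)
  right_inv : ∀ y : H, T ⟨R y, mem y⟩ - lam • R y = y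
  left_inv : ∀ u : ↥dT, Γ1 u = B (Γ2 u) → R (T u - lam • (u : H)) = (u : H)

/-- `S` is the solution operator `S_{lam,B}`: it maps `f` to the unique element of
`ker (T - lam)` with `(Γ1 - B Γ2) (S f) = f`. -/
structure IsSolOp {H E F : Type*}
    [NormedAddCommGroup H] [InnerProductSpace ℂ H]
    [NormedAddCommGroup E] [InnerProductSpace ℂ E]
    [NormedAddCommGroup F] [InnerProductSpace ℂ F]
    (dT : Submodule ℂ H) (T : ↥dT →ₗ[ℂ] H)
    (Γ1 : ↥dT →ₗ[ℂ] E) (Γ2 : ↥dT →ₗ[ℂ] F)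
    (B : F →L[ℂ] E) (lam : ℂ) (S : E →ₗ[ℂ] ↥dT) : Prop where
  in_ker : ∀ f : E, T (S f) = lam • ((S f : H))
  trace : ∀ f : E, Γ1 (S f) - B (Γ2 (S f)) = f
  inv : ∀ u : ↥dT, T u = lam • (u : H) → S (Γ1 u - B (Γ2 u)) = u


section Aux

variable {H E F : Type*}
    [NormedAddCommGroup H] [InnerProductSpace ℂ H] [CompleteSpace H]
    [NormedAddCommGroup E] [InnerProductSpace ℂ E]
    [NormedAddCommGroup F] [InnerProductSpace ℂ F]
    (dT : Submodule ℂ H) (T : ↥dT →ₗ[ℂ] H)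
    (Γ1 : ↥dT →ₗ[ℂ] E) (Γ2 : ↥dT →ₗ[ℂ] F)
    (B : F →L[ℂ] E)

/-- Uniqueness of the resolvent. -/
theorem resolvent_unique {lam : ℂ} {R1 R2 : H →L[ℂ] H}
    (h1 : IsResolventAt dT T Γ1 Γ2 B lam R1)
    (h2 : IsResolventAt dT T Γ1 Γ2 B lam R2) : R1 = R2 := by
  ext y
  have key := h2.left_inv ⟨R1 y, h1.mem y⟩ (h1.bc y)
  simpa [h1.right_inv y] using key.symm

/-- Perturbation: shift the spectral parameter using a Neumann series. -/
theorem resolvent_shift {μ ν : ℂ} {K : H →L[ℂ] H}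
    (hK : IsResolventAt dT T Γ1 Γ2 B μ K)
    (h : ‖(ν - μ) • K‖ < 1) :
    IsResolventAt dT T Γ1 Γ2 B ν (K * Ring.inverse (1 - (ν - μ) • K)) := by
  set c : ℂ := ν - μ with hc
  have hu : IsUnit (1 - c • K) := by
    simpa using (Units.oneSub (c • K) h).isUnit
  set W : H →L[ℂ] H := Ring.inverse (1 - c • K) with hW
  have hmulW : (1 - c • K) * W = 1 := Ring.mul_inverse_cancel _ hu
  have hWmul : W * (1 - c • K) = 1 := Ring.inverse_mul_cancel _ hu
  have hmem : ∀ y : H, (K * W) y ∈ dT := fun y => hK.mem (W y)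
  refine ⟨hmem, ?_, ?_, ?_⟩
  · intro y; exact hK.bc (W y)
  · intro y
    have h1 : T ⟨K (W y), hK.mem (W y)⟩ - μ • K (W y) = W y := hK.right_inv (W y)
    have h2 : ((1 - c • K) * W) y = y := by rw [hmulW]; simp
    have h3 : W y - c • K (W y) = y := by
      simpa [ContinuousLinearMap.mul_apply, sub_smul] using h2
    have : T ⟨K (W y), hK.mem (W y)⟩ - ν • K (W y)
        = (T ⟨K (W y), hK.mem (W y)⟩ - μ • K (W y)) - c • K (W y) := by
      rw [hc]; module
    show T ⟨K (W y), hK.mem (W y)⟩ - ν • K (W y) = y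
    rw [this, h1, h3]
  · intro u hu'
    have h1 : K (T u - μ • (u : H)) = (u : H) := hK.left_inv u hu'
    have h2 : W ((1 - c • K) (T u - μ • (u : H))) = T u - μ • (u : H) := by
      have : (W * (1 - c • K)) (T u - μ • (u : H)) = T u - μ • (u : H) := by
        rw [hWmul]; simp
      simpa [ContinuousLinearMap.mul_apply] using this
    have h3 : (1 - c • K) (T u - μ • (u : H)) = T u - ν • (u : H) := by
      have : (1 - c • K) (T u - μ • (u : H))
          = (T u - μ • (u : H)) - c • K (T u - μ • (u : H)) := by
        simp [sub_smul]
      rw [this, h1, hc]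
      have : T u - μ • (u : H) - (ν - μ) • (u : H) = T u - ν • (u : H) := by
        rw [sub_smul]; abel
      rw [this]
    have h4 : W (T u - ν • (u : H)) = T u - μ • (u : H) := by rw [← h3]; exact h2
    show K (W (T u - ν • (u : H))) = (u : H)
    rw [h4, h1]

end Aux

/-- `ρ(A_B)` is open, and `λ ↦ S_{λ,B} f` has complex derivative
`(A_B − μ)⁻¹ S_{μ,B} f` at every `μ ∈ ρ(A_B)`. -/
theorem statement_2
    {H 𝓗 𝓚 : Type*}
    [NormedAddCommGroup H] [InnerProductSpace ℂ H] [CompleteSpace H]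
    [NormedAddCommGroup 𝓗] [InnerProductSpace ℂ 𝓗] [CompleteSpace 𝓗]
    [NormedAddCommGroup 𝓚] [InnerProductSpace ℂ 𝓚] [CompleteSpace 𝓚]
    (dT : Submodule ℂ H) (T : ↥dT →ₗ[ℂ] H)
    (Γ1 : ↥dT →ₗ[ℂ] 𝓗) (Γ2 : ↥dT →ₗ[ℂ] 𝓚)
    (B : 𝓚 →L[ℂ] 𝓗)
    (res : Set ℂ)
    (hres : res = {lam : ℂ | ∃ R : H →L[ℂ] H, IsResolventAt dT T Γ1 Γ2 B lam R})
    (R : ℂ → H →L[ℂ] H)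
    (hR : ∀ lam ∈ res, IsResolventAt dT T Γ1 Γ2 B lam (R lam))
    (S : ℂ → 𝓗 →ₗ[ℂ] ↥dT)
    (hS : ∀ lam ∈ res, IsSolOp dT T Γ1 Γ2 B lam (S lam)) :
    IsOpen res ∧
      ∀ (f : 𝓗) (μ : ℂ), μ ∈ res →
        HasDerivAt (fun lam : ℂ => ((S lam f : H))) (R μ ((S μ f : H))) μ := by
  subst hres
  -- Openness with explicit ball
  have hball : ∀ μ ∈ {lam : ℂ | ∃ R : H →L[ℂ] H, IsResolventAt dT T Γ1 Γ2 B lam R},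
      ∀ ν ∈ Metric.ball μ (‖R μ‖ + 1)⁻¹,
      IsResolventAt dT T Γ1 Γ2 B ν (R μ * Ring.inverse (1 - (ν - μ) • R μ)) := by
    intro μ hμ ν hν
    have hKres := hR μ hμ
    have hpos : (0 : ℝ) < ‖R μ‖ + 1 := by positivity
    have hdist : ‖ν - μ‖ < (‖R μ‖ + 1)⁻¹ := by
      simpa [dist_eq_norm] using hν
    have hnorm : ‖(ν - μ) • R μ‖ < 1 := by
      rw [norm_smul]
      calc ‖ν - μ‖ * ‖R μ‖ ≤ ‖ν - μ‖ * (‖R μ‖ + 1) := by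
            apply mul_le_mul_of_nonneg_left (by linarith) (norm_nonneg _)
        _ < (‖R μ‖ + 1)⁻¹ * (‖R μ‖ + 1) := by
            apply mul_lt_mul_of_pos_right hdist hpos
        _ = 1 := inv_mul_cancel₀ (ne_of_gt hpos)
    exact resolvent_shift dT T Γ1 Γ2 B hKres hnorm
  have hopen : IsOpen {lam : ℂ | ∃ R : H →L[ℂ] H, IsResolventAt dT T Γ1 Γ2 B lam R} := by
    rw [Metric.isOpen_iff]
    intro μ hμ
    refine ⟨(‖R μ‖ + 1)⁻¹, by positivity, fun ν hν => ⟨_, hball μ hμ ν hν⟩⟩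
  refine ⟨hopen, ?_⟩
  intro f μ hμ
  set res := {lam : ℂ | ∃ R : H →L[ℂ] H, IsResolventAt dT T Γ1 Γ2 B lam R} with hres
  set x : H := ((S μ f : H)) with hx
  -- first-resolvent-type identity on res
  have hid : ∀ ν ∈ res, ((S ν f : H)) = x + (ν - μ) • (R ν x) := by
    intro ν hν
    have hSν := hS ν hν
    have hSμ := hS μ hμ
    have hRν := hR ν hν
    have hbc : Γ1 (S ν f - S μ f) = B (Γ2 (S ν f - S μ f)) := by
      have h0 : Γ1 (S ν f - S μ f) - B (Γ2 (S ν f - S μ f)) = 0 := by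
        simp only [map_sub]
        rw [show Γ1 (S ν f) - Γ1 (S μ f) - (B (Γ2 (S ν f)) - B (Γ2 (S μ f)))
            = (Γ1 (S ν f) - B (Γ2 (S ν f))) - (Γ1 (S μ f) - B (Γ2 (S μ f))) by abel,
          hSν.trace f, hSμ.trace f, sub_self]
      exact sub_eq_zero.mp h0
    have key := hRν.left_inv _ hbc
    have hker : T (S ν f - S μ f) - ν • ((S ν f - S μ f : ↥dT) : H) = (ν - μ) • x := by
      simp only [map_sub, hSν.in_ker f, hSμ.in_ker f, AddSubgroupClass.coe_sub, hx]
      module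
    rw [hker] at key
    have hthis : (ν - μ) • R ν x = ((S ν f : H)) - x := by
      rw [← map_smul, key, AddSubgroupClass.coe_sub]
    rw [hthis]; abel
  -- identify R ν with the Neumann series near μ
  have hKres := hR μ hμ
  have hRformula : ∀ ν ∈ Metric.ball μ (‖R μ‖ + 1)⁻¹,
      R ν = R μ * Ring.inverse (1 - (ν - μ) • R μ) := by
    intro ν hν
    have h1 := hball μ hμ ν hν
    exact resolvent_unique dT T Γ1 Γ2 B (hR ν ⟨_, h1⟩) h1
  -- continuity of the Neumann series at μ
  have hcont : Filter.Tendsto (fun ν : ℂ => (R μ * Ring.inverse (1 - (ν - μ) • R μ)) x)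
      (nhds μ) (nhds (R μ x)) := by
    have hc1 : ContinuousAt (fun ν : ℂ => (1 - (ν - μ) • R μ : H →L[ℂ] H)) μ := by
      fun_prop
    have hc2 : ContinuousAt (Ring.inverse : (H →L[ℂ] H) → (H →L[ℂ] H)) (1 : H →L[ℂ] H) := by
      have := NormedRing.inverse_continuousAt (1 : (H →L[ℂ] H)ˣ)
      simpa using this
    have hc3 : ContinuousAt (fun ν : ℂ => Ring.inverse (1 - (ν - μ) • R μ : H →L[ℂ] H)) μ := by
      have : (fun ν : ℂ => Ring.inverse (1 - (ν - μ) • R μ : H →L[ℂ] H))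
          = (Ring.inverse : (H →L[ℂ] H) → _) ∘ (fun ν : ℂ => (1 - (ν - μ) • R μ : H →L[ℂ] H)) := rfl
      rw [this]
      apply ContinuousAt.comp _ hc1
      simpa using hc2
    have hc4 : ContinuousAt (fun ν : ℂ => (R μ * Ring.inverse (1 - (ν - μ) • R μ)) x) μ := by
      simp only [ContinuousLinearMap.mul_apply]
      exact (ContinuousLinearMap.continuous (R μ)).continuousAt.comp
        ((ContinuousLinearMap.apply ℂ H x).continuous.continuousAt.comp hc3)
    have heq : (fun ν : ℂ => (R μ * Ring.inverse (1 - (ν - μ) • R μ)) x) μ = R μ x := by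
      simp
    rw [← heq]
    exact hc4
  -- conclude via slopes
  rw [hasDerivAt_iff_tendsto_slope]
  have hmem : Metric.ball μ (‖R μ‖ + 1)⁻¹ ∈ nhds μ :=
    Metric.ball_mem_nhds μ (by positivity)
  have hEq : ∀ᶠ ν in nhdsWithin μ {μ}ᶜ,
      slope (fun lam : ℂ => ((S lam f : H))) μ ν
        = (R μ * Ring.inverse (1 - (ν - μ) • R μ)) x := by
    filter_upwards [self_mem_nhdsWithin,
      nhdsWithin_le_nhds hmem] with ν hν1 hν2
    have hνres : ν ∈ res := ⟨_, hball μ hμ ν hν2⟩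
    have hne : ν - μ ≠ 0 := sub_ne_zero.mpr hν1
    rw [slope, vsub_eq_sub, ← hRformula ν hν2, hid ν hνres]
    simp only [← hx, add_sub_cancel_left]
    rw [smul_smul, inv_mul_cancel₀ hne, one_smul]
  exact Filter.Tendsto.congr' (Filter.EventuallyEq.symm hEq) (hcont.mono_left nhdsWithin_le_nhds)
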